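/- Let (Ω, 𝓕, P) be a probability space, let ε_t > 0 be a given error tolerance, let ℓ ≥ 1, N ≥ 1, let U_1, …, U_N be fixed nonzero ℓ×ℓ real matrices, and let Ũ_1, …, Ũ_N : Ω → M_ℓ(ℝ) be independent measurable random matrices with finite second-moment norms. Suppose the machine epsilon satisfies ε_m ≤ ε_t / (N √(e·ℓ)) and that for every p: (i) E[(‖U_p − Ũ_p‖/‖U_p‖)²] ≤ ℓ ε_m², and (ii) E[(‖Ũ_p‖/‖U_p‖)²] ≤ 1 + 1/N. Then the relative error ε := ‖U_N ⋯ U_1 − Ũ_N ⋯ Ũ_1‖ / (∏_{p=1}^{N} ‖U_p‖) satisfies σ(ε) ≤ ε_t. -/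

import Mathlib

open MeasureTheory ProbabilityTheory
open scoped Matrix.Norms.L2Operator

/-- Matrices inherit the product measurable-space structure (entrywise). -/
instance matrixMeasurableSpace {l : ℕ} : MeasurableSpace (Matrix (Fin l) (Fin l) ℝ) :=
  inferInstanceAs (MeasurableSpace ((Fin l) → (Fin l) → ℝ))

/-- The ordered product `U_{n} U_{n-1} ⋯ U_1` of matrices (written with 0-based
indices), where the factor with the largest index acts last (leftmost). -/
noncomputable def mprod {l : ℕ} (U : ℕ → Matrix (Fin l) (Fin l) ℝ) :
    ℕ → Matrix (Fin l) (Fin l) ℝ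
  | 0 => 1
  | n + 1 => U n * mprod U n

section helpers
variable {l : ℕ}

lemma matNorm_measurable : Measurable (fun M : Matrix (Fin l) (Fin l) ℝ => ‖M‖) := by
  have h1 : Continuous (fun x : (Fin l → Fin l → ℝ) => (Matrix.of x : Matrix (Fin l) (Fin l) ℝ)) := by
    let f : (Fin l → Fin l → ℝ) →ₗ[ℝ] Matrix (Fin l) (Fin l) ℝ :=
      { toFun := fun x => Matrix.of x
        map_add' := fun _ _ => rfl
        map_smul' := fun _ _ => rfl }
    exact f.continuous_of_finiteDimensional
  exact (continuous_norm.comp h1).measurable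

lemma matEntry_measurable (i j : Fin l) :
    Measurable (fun M : Matrix (Fin l) (Fin l) ℝ => M i j) :=
  (measurable_pi_apply j).comp (measurable_pi_apply i)

lemma matMul_measurable {Ω : Type*} [MeasurableSpace Ω]
    {A B : Ω → Matrix (Fin l) (Fin l) ℝ} (hA : Measurable A) (hB : Measurable B) :
    Measurable (fun ω => A ω * B ω) := by
  refine measurable_pi_lambda _ fun i => measurable_pi_lambda _ fun j => ?_
  simp only [Matrix.mul_apply]
  exact Finset.measurable_sum _ fun k _ =>
    ((matEntry_measurable i k).comp hA).mul ((matEntry_measurable k j).comp hB)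

lemma matSub_measurable {Ω : Type*} [MeasurableSpace Ω]
    {A B : Ω → Matrix (Fin l) (Fin l) ℝ} (hA : Measurable A) (hB : Measurable B) :
    Measurable (fun ω => A ω - B ω) := by
  refine measurable_pi_lambda _ fun i => measurable_pi_lambda _ fun j => ?_
  simp only [Matrix.sub_apply]
  exact ((matEntry_measurable i j).comp hA).sub ((matEntry_measurable i j).comp hB)

lemma mprod_measurable {Ω : Type*} [MeasurableSpace Ω]
    (V : ℕ → Ω → Matrix (Fin l) (Fin l) ℝ) :
    ∀ n, (∀ p < n, Measurable (V p)) → Measurable (fun ω => mprod (fun p => V p ω) n)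
  | 0, _ => by simpa [mprod] using measurable_const
  | (n+1), h => by
      have h1 := h n (Nat.lt_succ_self n)
      have h2 := mprod_measurable V n (fun p hp => h p (hp.trans (Nat.lt_succ_self n)))
      simpa [mprod] using matMul_measurable h1 h2

lemma matNorm_one (hl : 1 ≤ l) : ‖(1 : Matrix (Fin l) (Fin l) ℝ)‖ = 1 := by
  haveI : Nonempty (Fin l) := ⟨⟨0, hl⟩⟩
  rw [Matrix.cstar_norm_def, map_one]
  exact norm_one

lemma mprod_norm_le (hl : 1 ≤ l) (U : ℕ → Matrix (Fin l) (Fin l) ℝ) :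
    ∀ n, ‖mprod U n‖ ≤ ∏ q ∈ Finset.range n, ‖U q‖
  | 0 => by simp [mprod, matNorm_one hl]
  | (n+1) => by
      have ih := mprod_norm_le hl U n
      calc ‖mprod U (n+1)‖ ≤ ‖U n‖ * ‖mprod U n‖ := norm_mul_le _ _
      _ ≤ ‖U n‖ * ∏ q ∈ Finset.range n, ‖U q‖ :=
          mul_le_mul_of_nonneg_left ih (norm_nonneg _)
      _ = ∏ q ∈ Finset.range (n+1), ‖U q‖ := by rw [Finset.prod_range_succ, mul_comm]

lemma telescope (hl : 1 ≤ l) (U W : ℕ → Matrix (Fin l) (Fin l) ℝ) :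
    ∀ n, ‖mprod U n - mprod W n‖ ≤
      ∑ p ∈ Finset.range n, (∏ q ∈ Finset.Ico (p+1) n, ‖W q‖) *
        (‖U p - W p‖ * ∏ q ∈ Finset.range p, ‖U q‖)
  | 0 => by simp [mprod]
  | (n+1) => by
      have ih := telescope hl U W n
      have key : mprod U (n+1) - mprod W (n+1) =
          (U n - W n) * mprod U n + W n * (mprod U n - mprod W n) := by
        show U n * mprod U n - W n * mprod W n = _
        rw [sub_mul, mul_sub]; abel
      calc ‖mprod U (n+1) - mprod W (n+1)‖
          ≤ ‖(U n - W n) * mprod U n‖ + ‖W n * (mprod U n - mprod W n)‖ := by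
            rw [key]; exact norm_add_le _ _
        _ ≤ ‖U n - W n‖ * ∏ q ∈ Finset.range n, ‖U q‖ +
            ‖W n‖ * ∑ p ∈ Finset.range n, (∏ q ∈ Finset.Ico (p+1) n, ‖W q‖) *
              (‖U p - W p‖ * ∏ q ∈ Finset.range p, ‖U q‖) := by
            refine add_le_add ?_ ?_
            · exact (norm_mul_le _ _).trans
                (mul_le_mul_of_nonneg_left (mprod_norm_le hl U n) (norm_nonneg _))
            · exact (norm_mul_le _ _).trans
                (mul_le_mul_of_nonneg_left ih (norm_nonneg _))
        _ = ∑ p ∈ Finset.range (n+1), (∏ q ∈ Finset.Ico (p+1) (n+1), ‖W q‖) *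
              (‖U p - W p‖ * ∏ q ∈ Finset.range p, ‖U q‖) := by
            rw [Finset.sum_range_succ, Finset.mul_sum]
            rw [show Finset.Ico (n+1) (n+1) = ∅ from Finset.Ico_self _]
            simp only [Finset.prod_empty, one_mul]
            rw [add_comm]
            congr 1
            refine Finset.sum_congr rfl fun p hp => ?_
            rw [Finset.prod_Ico_succ_top (Nat.succ_le_of_lt (Finset.mem_range.1 hp))]
            ring

lemma prod_attachFin {n : ℕ} (s : Finset ℕ) (h : ∀ m ∈ s, m < n) (a : ℕ → ℝ) :
    ∏ q ∈ s.attachFin h, a (q : ℕ) = ∏ x ∈ s, a x := by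
  refine Finset.prod_bij (fun q _ => (q : ℕ)) ?_ ?_ ?_ ?_
  · intro q hq; exact (Finset.mem_attachFin h).1 hq
  · intro q hq r hr hqr; exact Fin.val_injective hqr
  · intro x hx; exact ⟨⟨x, h x hx⟩, (Finset.mem_attachFin h).2 hx, rfl⟩
  · intro q hq; rfl

lemma indep_prod_integral {Ω : Type*} [MeasurableSpace Ω] {P : Measure Ω}
    [IsProbabilityMeasure P] {f : ℕ → Ω → ℝ} (s : Finset ℕ)
    (hint : ∀ i ∈ s, Integrable (f i) P)
    (hind : ∀ i ∈ s, ∀ t ⊆ s, i ∉ t → IndepFun (fun ω => ∏ j ∈ t, f j ω) (f i) P) :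
    Integrable (fun ω => ∏ i ∈ s, f i ω) P ∧
      ∫ ω, ∏ i ∈ s, f i ω ∂P = ∏ i ∈ s, ∫ ω, f i ω ∂P := by
  classical
  induction s using Finset.induction_on with
  | empty => simp
  | @insert a s' hnotmem ih =>
    have hInd : IndepFun (fun ω => ∏ j ∈ s', f j ω) (f a) P :=
      hind a (Finset.mem_insert_self _ _) s' (Finset.subset_insert _ _) hnotmem
    have ih' := ih (fun i hi => hint i (Finset.mem_insert_of_mem hi))
      (fun i hi t ht hit =>
        hind i (Finset.mem_insert_of_mem hi) t (ht.trans (Finset.subset_insert _ _)) hit)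
    have heq : (fun ω => ∏ i ∈ insert a s', f i ω) =
        (f a * fun ω => ∏ i ∈ s', f i ω) := by
      funext ω; simp [Finset.prod_insert hnotmem]
    constructor
    · rw [heq]
      exact hInd.symm.integrable_mul (hint a (Finset.mem_insert_self _ _)) ih'.1
    · rw [heq, hInd.symm.integral_mul_eq_mul_integral
        (hint a (Finset.mem_insert_self _ _)).aestronglyMeasurable ih'.1.aestronglyMeasurable,
        Finset.prod_insert hnotmem, ih'.2]

lemma cs_integral {Ω : Type*} [MeasurableSpace Ω] {P : Measure Ω} [IsProbabilityMeasure P]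
    {a b : Ω → ℝ} (ha : MemLp a 2 P) (hb : MemLp b 2 P)
    (hapos : ∀ ω, 0 ≤ a ω) (hbpos : ∀ ω, 0 ≤ b ω) :
    ∫ ω, a ω * b ω ∂P ≤
      Real.sqrt (∫ ω, a ω ^ 2 ∂P) * Real.sqrt (∫ ω, b ω ^ 2 ∂P) := by
  have hconj : (2 : ℝ).HolderConjugate 2 := Real.HolderConjugate.two_two
  have h2 : ENNReal.ofReal (2:ℝ) = 2 := by
    rw [ENNReal.ofReal_ofNat]
  have ha' : MemLp a (ENNReal.ofReal (2:ℝ)) P := by rw [h2]; exact ha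
  have hb' : MemLp b (ENNReal.ofReal (2:ℝ)) P := by rw [h2]; exact hb
  have := MeasureTheory.integral_mul_le_Lp_mul_Lq_of_nonneg hconj
    (ae_of_all _ hapos) (ae_of_all _ hbpos) ha' hb'
  simp only [show ((2:ℝ)) = ((2:ℕ):ℝ) by norm_num, Real.rpow_natCast] at this
  rw [Real.sqrt_eq_rpow, Real.sqrt_eq_rpow]
  convert this using 3 <;> norm_num

lemma integrable_sq_of_memℒp {Ω : Type*} [MeasurableSpace Ω] {P : Measure Ω}
    [IsProbabilityMeasure P] {g : Ω → ℝ} (hg : MemLp g 2 P) :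
    Integrable (fun ω => g ω ^ 2) P :=
  (memLp_two_iff_integrable_sq hg.aestronglyMeasurable).1 hg

lemma integrable_mul_of_memℒp {Ω : Type*} [MeasurableSpace Ω] {P : Measure Ω}
    [IsProbabilityMeasure P] {a b : Ω → ℝ} (ha : MemLp a 2 P) (hb : MemLp b 2 P)
    (hapos : ∀ ω, 0 ≤ a ω) (hbpos : ∀ ω, 0 ≤ b ω) :
    Integrable (fun ω => a ω * b ω) P := by
  refine Integrable.mono' ((integrable_sq_of_memℒp ha).add (integrable_sq_of_memℒp hb))
    (ha.aestronglyMeasurable.mul hb.aestronglyMeasurable) (ae_of_all _ fun ω => ?_)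
  have h1 : 0 ≤ a ω * b ω := mul_nonneg (hapos ω) (hbpos ω)
  have h2 : 2 * a ω * b ω ≤ a ω ^ 2 + b ω ^ 2 := two_mul_le_add_sq _ _
  rw [Real.norm_of_nonneg h1]
  simp only [Pi.add_apply]
  nlinarith

lemma sq_integral_sum_le {Ω : Type*} [MeasurableSpace Ω] {P : Measure Ω}
    [IsProbabilityMeasure P] {f : ℕ → Ω → ℝ} (s : Finset ℕ)
    (hL2 : ∀ i ∈ s, MemLp (f i) 2 P) (hpos : ∀ i ∈ s, ∀ ω, 0 ≤ f i ω) :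
    ∫ ω, (∑ i ∈ s, f i ω) ^ 2 ∂P ≤
      (∑ i ∈ s, Real.sqrt (∫ ω, f i ω ^ 2 ∂P)) ^ 2 := by
  classical
  induction s using Finset.induction_on with
  | empty => simp
  | @insert a s' hnotmem ih =>
    have hfa : MemLp (f a) 2 P := hL2 a (Finset.mem_insert_self _ _)
    have hL2' : ∀ i ∈ s', MemLp (f i) 2 P := fun i hi => hL2 i (Finset.mem_insert_of_mem hi)
    have hpos' : ∀ i ∈ s', ∀ ω, 0 ≤ f i ω := fun i hi => hpos i (Finset.mem_insert_of_mem hi)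
    have ih' := ih hL2' hpos'
    set b : Ω → ℝ := fun ω => ∑ i ∈ s', f i ω with hbdef
    have hb : MemLp b 2 P := memLp_finset_sum s' hL2'
    have hbpos : ∀ ω, 0 ≤ b ω := fun ω => Finset.sum_nonneg fun i hi => hpos' i hi ω
    have hapos : ∀ ω, 0 ≤ f a ω := hpos a (Finset.mem_insert_self _ _)
    have ha2 := integrable_sq_of_memℒp hfa
    have hb2 := integrable_sq_of_memℒp hb
    have hab := integrable_mul_of_memℒp hfa hb hapos hbpos
    set A := Real.sqrt (∫ ω, f a ω ^ 2 ∂P) with hAdef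
    set B := Real.sqrt (∫ ω, b ω ^ 2 ∂P) with hBdef
    set S := ∑ i ∈ s', Real.sqrt (∫ ω, f i ω ^ 2 ∂P) with hSdef
    have hSpos : 0 ≤ S := Finset.sum_nonneg fun i _ => Real.sqrt_nonneg _
    have hApos : 0 ≤ A := Real.sqrt_nonneg _
    have hBS : B ≤ S := by
      have := Real.sqrt_le_sqrt ih'
      rwa [Real.sqrt_sq hSpos] at this
    have hsplit : ∫ ω, (∑ i ∈ insert a s', f i ω) ^ 2 ∂P =
        ∫ ω, f a ω ^ 2 ∂P + (2 * ∫ ω, f a ω * b ω ∂P + ∫ ω, b ω ^ 2 ∂P) := by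
      have h1 : (fun ω => (∑ i ∈ insert a s', f i ω) ^ 2) =
          fun ω => f a ω ^ 2 + (2 * (f a ω * b ω) + b ω ^ 2) := by
        funext ω; rw [Finset.sum_insert hnotmem]; ring
      have hg : Integrable (fun ω => 2 * (f a ω * b ω) + b ω ^ 2) P :=
        (hab.const_mul 2).add hb2
      rw [h1, integral_add ha2 hg,
        integral_add (hab.const_mul 2) hb2, integral_const_mul]
    have hA2 : ∫ ω, f a ω ^ 2 ∂P = A ^ 2 := by
      rw [hAdef, Real.sq_sqrt (integral_nonneg fun ω => sq_nonneg _)]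
    have hB2 : ∫ ω, b ω ^ 2 ∂P = B ^ 2 := by
      rw [hBdef, Real.sq_sqrt (integral_nonneg fun ω => sq_nonneg _)]
    have hcs := cs_integral hfa hb hapos hbpos
    calc ∫ ω, (∑ i ∈ insert a s', f i ω) ^ 2 ∂P
        = ∫ ω, f a ω ^ 2 ∂P + (2 * ∫ ω, f a ω * b ω ∂P + ∫ ω, b ω ^ 2 ∂P) := hsplit
      _ ≤ A ^ 2 + (2 * (A * B) + B ^ 2) := by
          rw [hA2, hB2]
          have : (2:ℝ) * ∫ ω, f a ω * b ω ∂P ≤ 2 * (A * B) := by linarith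
          linarith
      _ = (A + B) ^ 2 := by ring
      _ ≤ (A + S) ^ 2 := by
          have h1 : 0 ≤ A + B := by positivity
          have h2 : A + B ≤ A + S := by linarith
          nlinarith
      _ = (∑ i ∈ insert a s', Real.sqrt (∫ ω, f i ω ^ 2 ∂P)) ^ 2 := by
          rw [Finset.sum_insert hnotmem]

end helpers

/-- On a probability space `(Ω, 𝓕, P)`, with error tolerance `ε_t > 0`,
`ℓ ≥ 1`, `N ≥ 1`, fixed nonzero `ℓ×ℓ` real matrices `U_1, …, U_N`, and independent
measurable random matrices `Ũ_1, …, Ũ_N : Ω → M_ℓ(ℝ)` whose spectral norms have finite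
second moments, suppose the machine epsilon satisfies `ε_m ≤ ε_t / (N √(e·ℓ))` and for
every `p`: (i) `E[(‖U_p − Ũ_p‖/‖U_p‖)²] ≤ ℓ ε_m²`, and (ii) `E[(‖Ũ_p‖/‖U_p‖)²] ≤ 1 + 1/N`.
Then the relative error `ε := ‖U_N ⋯ U_1 − Ũ_N ⋯ Ũ_1‖ / ∏_p ‖U_p‖` satisfies
`σ(ε) ≤ ε_t`. -/
theorem tolerance_random_product_error {Ω : Type*} [MeasurableSpace Ω]
    (P : Measure Ω) [IsProbabilityMeasure P]
    {l N : ℕ} (hl : 1 ≤ l) (hN : 1 ≤ N) (εt : ℝ) (hεt : 0 < εt)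
    (εm : ℝ) (hεm : 0 ≤ εm)
    (hεm_le : εm ≤ εt / ((N : ℝ) * Real.sqrt (Real.exp 1 * l)))
    (U : ℕ → Matrix (Fin l) (Fin l) ℝ) (hU : ∀ p < N, U p ≠ 0)
    (V : ℕ → Ω → Matrix (Fin l) (Fin l) ℝ)
    (hVmeas : ∀ p < N, Measurable (V p))
    (hVL2 : ∀ p < N, MemLp (fun ω => ‖V p ω‖) 2 P)
    (hindep : iIndepFun (m := fun _ : Fin N => inferInstance) (fun p : Fin N => V p.1) P)
    (herr : ∀ p < N, ∫ ω, (‖U p - V p ω‖ / ‖U p‖) ^ 2 ∂P ≤ (l : ℝ) * εm ^ 2)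
    (hnorm : ∀ p < N, ∫ ω, (‖V p ω‖ / ‖U p‖) ^ 2 ∂P ≤ 1 + 1 / (N : ℝ)) :
    Real.sqrt (variance
        (fun ω => ‖mprod U N - mprod (fun p => V p ω) N‖ / ∏ p ∈ Finset.range N, ‖U p‖) P) ≤
      εt := by
  classical
  set D : ℝ := ∏ p ∈ Finset.range N, ‖U p‖ with hDdef
  have hUnorm : ∀ p < N, 0 < ‖U p‖ := fun p hp => norm_pos_iff.2 (hU p hp)
  have hD : 0 < D := Finset.prod_pos fun p hp => hUnorm p (Finset.mem_range.1 hp)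
  set Y : ℕ → Ω → ℝ := fun q ω => ‖V q ω‖ / ‖U q‖ with hYdef
  set Z : ℕ → Ω → ℝ := fun p ω => ‖U p - V p ω‖ / ‖U p‖ with hZdef
  set X : ℕ → Ω → ℝ := fun p ω => (∏ q ∈ Finset.Ico (p+1) N, Y q ω) * Z p ω with hXdef
  set ε : Ω → ℝ := fun ω => ‖mprod U N - mprod (fun p => V p ω) N‖ / D with hεdef
  have hYpos : ∀ q ω, 0 ≤ Y q ω := fun q ω => div_nonneg (norm_nonneg _) (norm_nonneg _)
  have hZpos : ∀ p ω, 0 ≤ Z p ω := fun p ω => div_nonneg (norm_nonneg _) (norm_nonneg _)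
  have hXpos : ∀ p ω, 0 ≤ X p ω := fun p ω =>
    mul_nonneg (Finset.prod_nonneg fun q _ => hYpos q ω) (hZpos p ω)
  have hYmeas : ∀ q < N, Measurable (Y q) := fun q hq =>
    (matNorm_measurable.comp (hVmeas q hq)).div_const _
  have hZmeas : ∀ p < N, Measurable (Z p) := fun p hp =>
    (matNorm_measurable.comp (matSub_measurable measurable_const (hVmeas p hp))).div_const _
  have hXmeas : ∀ p < N, Measurable (X p) := fun p hp =>
    (Finset.measurable_prod _ fun q hq => hYmeas q (Finset.mem_Ico.1 hq).2).mul (hZmeas p hp)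
  have hYL2 : ∀ q < N, MemLp (Y q) 2 P := by
    intro q hq
    have h := (hVL2 q hq).const_mul (‖U q‖)⁻¹
    have heq : Y q = fun ω => (‖U q‖)⁻¹ * ‖V q ω‖ := by
      funext ω; simp [hYdef, div_eq_inv_mul]
    rw [heq]; exact h
  have hZL2 : ∀ p < N, MemLp (Z p) 2 P := by
    intro p hp
    have hg : MemLp (fun ω => 1 + Y p ω) 2 P := (memLp_const (1:ℝ)).add (hYL2 p hp)
    refine MemLp.of_le hg (hZmeas p hp).aestronglyMeasurable (ae_of_all _ fun ω => ?_)
    have hup := hUnorm p hp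
    have h1 : Z p ω ≤ 1 + Y p ω := by
      have hb : ‖U p - V p ω‖ ≤ ‖U p‖ + ‖V p ω‖ := norm_sub_le _ _
      simp only [hZdef, hYdef]
      calc ‖U p - V p ω‖ / ‖U p‖ ≤ (‖U p‖ + ‖V p ω‖) / ‖U p‖ := by gcongr
        _ = 1 + ‖V p ω‖ / ‖U p‖ := by rw [add_div, div_self hup.ne']
    rw [Real.norm_of_nonneg (hZpos p ω),
      Real.norm_of_nonneg (add_nonneg zero_le_one (hYpos p ω))]
    exact h1
  -- pointwise bound on ε
  have hεle : ∀ ω, ε ω ≤ ∑ p ∈ Finset.range N, X p ω := by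
    intro ω
    have tel := telescope hl U (fun q => V q ω) N
    show ‖mprod U N - mprod (fun p => V p ω) N‖ / D ≤ _
    rw [div_le_iff₀ hD]
    refine tel.trans (le_of_eq ?_)
    rw [Finset.sum_mul]
    refine Finset.sum_congr rfl fun p hp => ?_
    have hpN := Finset.mem_range.1 hp
    have hDsplit : D = ((∏ q ∈ Finset.range p, ‖U q‖) * ‖U p‖) *
        ∏ q ∈ Finset.Ico (p+1) N, ‖U q‖ := by
      rw [hDdef, ← Finset.prod_range_mul_prod_Ico (fun q => ‖U q‖) (Nat.succ_le_of_lt hpN),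
        Finset.prod_range_succ]
    have h1 : ‖U p‖ ≠ 0 := (hUnorm p hpN).ne'
    have h2 : (∏ q ∈ Finset.Ico (p+1) N, ‖U q‖) ≠ 0 :=
      (Finset.prod_pos fun q hq => hUnorm q (Finset.mem_Ico.1 hq).2).ne'
    simp only [hXdef, hYdef, hZdef]
    rw [hDsplit, Finset.prod_div_distrib]
    field_simp
  -- second moment bound for each X p
  have hXint : ∀ p < N, Integrable (fun ω => X p ω ^ 2) P ∧
      ∫ ω, X p ω ^ 2 ∂P ≤ Real.exp 1 * l * εm ^ 2 := by
    intro p hp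
    set h : ℕ → Ω → ℝ := fun q ω => if q = p then Z p ω ^ 2 else Y q ω ^ 2 with hhdef
    set s : Finset ℕ := insert p (Finset.Ico (p+1) N) with hsdef
    have hsN : ∀ m ∈ s, m < N := by
      intro m hm
      rcases Finset.mem_insert.1 hm with h1 | h1
      · exact h1 ▸ hp
      · exact (Finset.mem_Ico.1 h1).2
    have hpnot : p ∉ Finset.Ico (p+1) N := by simp
    have hint : ∀ i ∈ s, Integrable (h i) P := by
      intro i hi
      by_cases hip : i = p
      · subst hip
        have := integrable_sq_of_memℒp (hZL2 i hp)
        simpa [hhdef] using this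
      · have hiN := hsN i hi
        have := integrable_sq_of_memℒp (hYL2 i hiN)
        simpa [hhdef, hip] using this
    have hind : ∀ i ∈ s, ∀ t ⊆ s, i ∉ t →
        IndepFun (fun ω => ∏ j ∈ t, h j ω) (h i) P := by
      intro i hi t ht hit
      have hiN : i < N := hsN i hi
      have htN : ∀ m ∈ t, m < N := fun m hm => hsN m (ht hm)
      set g : Fin N → Matrix (Fin l) (Fin l) ℝ → ℝ :=
        fun q M => if (q : ℕ) = p then (‖U p - M‖ / ‖U p‖) ^ 2
          else (‖M‖ / ‖U (q:ℕ)‖) ^ 2 with hgdef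
      have hg : ∀ q, Measurable (g q) := by
        intro q
        by_cases hqp : (q:ℕ) = p
        · simp only [hgdef, hqp, if_true]
          exact ((matNorm_measurable.comp
            (matSub_measurable measurable_const measurable_id)).div_const _).pow_const 2
        · simp only [hgdef, hqp, if_false]
          exact (matNorm_measurable.div_const _).pow_const 2
      have hH : iIndepFun (m := fun _ : Fin N => inferInstance)
          (fun q : Fin N => g q ∘ V (q:ℕ)) P := hindep.comp g hg
      have hpoint : ∀ (j : Fin N) (ω : Ω), (g j ∘ V (j:ℕ)) ω = h (j:ℕ) ω := by
        intro j ω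
        by_cases hjp : (j:ℕ) = p
        · simp [hgdef, hhdef, hZdef, hjp]
        · simp [hgdef, hhdef, hYdef, hjp]
      have hkey : (fun ω => ∏ j ∈ t, h j ω) =
          fun ω => ∏ j ∈ t.attachFin htN, (g j ∘ V (j:ℕ)) ω := by
        funext ω
        rw [← prod_attachFin t htN (fun q => h q ω)]
        exact Finset.prod_congr rfl fun j _ => (hpoint j ω).symm
      have hi' : (⟨i, hiN⟩ : Fin N) ∉ t.attachFin htN := by
        rw [Finset.mem_attachFin]
        exact hit
      have hIndep := iIndepFun.indepFun_finset_prod_of_notMem hH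
        (fun q => (hg q).comp (hVmeas (q:ℕ) q.isLt)) hi'
      have h2 : h i = g ⟨i, hiN⟩ ∘ V i := by
        funext ω; exact (hpoint ⟨i, hiN⟩ ω).symm
      have h3 : (fun ω => ∏ j ∈ t.attachFin htN, (g j ∘ V (j:ℕ)) ω) =
          ∏ j ∈ t.attachFin htN, (fun q : Fin N => g q ∘ V (q:ℕ)) j := by
        funext ω; simp [Finset.prod_apply]
      rw [hkey, h2, h3]
      exact hIndep
    obtain ⟨hI, hE⟩ := indep_prod_integral s hint hind
    have hXsq : ∀ ω, X p ω ^ 2 = ∏ i ∈ s, h i ω := by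
      intro ω
      rw [hsdef, Finset.prod_insert hpnot]
      have hco : ∀ i ∈ Finset.Ico (p+1) N, h i ω = Y i ω ^ 2 := by
        intro i hi
        have : i ≠ p := by have := (Finset.mem_Ico.1 hi).1; omega
        simp [hhdef, this]
      rw [Finset.prod_congr rfl hco]
      simp only [hhdef, if_pos rfl]
      simp only [hXdef]
      rw [mul_pow, ← Finset.prod_pow]
      ring
    have hIX : Integrable (fun ω => X p ω ^ 2) P := by
      rw [show (fun ω => X p ω ^ 2) = fun ω => ∏ i ∈ s, h i ω from funext hXsq]
      exact hI
    refine ⟨hIX, ?_⟩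
    have hEeq : ∫ ω, X p ω ^ 2 ∂P =
        (∫ ω, h p ω ∂P) * ∏ i ∈ Finset.Ico (p+1) N, ∫ ω, h i ω ∂P := by
      calc ∫ ω, X p ω ^ 2 ∂P = ∫ ω, ∏ i ∈ s, h i ω ∂P :=
            integral_congr_ae (ae_of_all _ hXsq)
        _ = ∏ i ∈ s, ∫ ω, h i ω ∂P := hE
        _ = _ := by rw [hsdef, Finset.prod_insert hpnot]
    have hZE : ∫ ω, h p ω ∂P ≤ (l:ℝ) * εm ^ 2 := by
      have := herr p hp
      have heq : (fun ω => h p ω) = fun ω => (‖U p - V p ω‖ / ‖U p‖) ^ 2 := by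
        funext ω; simp [hhdef, hZdef]
      rw [show ∫ ω, h p ω ∂P = ∫ ω, (‖U p - V p ω‖ / ‖U p‖) ^ 2 ∂P by rw [← heq]]
      exact this
    have hZE0 : 0 ≤ ∫ ω, h p ω ∂P :=
      integral_nonneg fun ω => by simp only [hhdef, if_pos rfl]; positivity
    have hYE : ∀ i ∈ Finset.Ico (p+1) N,
        (0 ≤ ∫ ω, h i ω ∂P ∧ ∫ ω, h i ω ∂P ≤ 1 + 1 / (N:ℝ)) := by
      intro i hi
      have hiN := (Finset.mem_Ico.1 hi).2
      have hip : i ≠ p := by have := (Finset.mem_Ico.1 hi).1; omega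
      have heq : (fun ω => h i ω) = fun ω => (‖V i ω‖ / ‖U i‖) ^ 2 := by
        funext ω; simp [hhdef, hYdef, hip]
      constructor
      · exact integral_nonneg fun ω => by simp only [hhdef, hip, if_false]; positivity
      · rw [show ∫ ω, h i ω ∂P = ∫ ω, (‖V i ω‖ / ‖U i‖) ^ 2 ∂P by rw [← heq]]
        exact hnorm i hiN
    have hN' : (0:ℝ) < N := by exact_mod_cast Nat.pos_of_ne_zero (by omega)
    have hone : (1:ℝ) ≤ 1 + 1 / (N:ℝ) := by
      have : (0:ℝ) ≤ 1 / (N:ℝ) := by positivity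
      linarith
    have hprodle : ∏ i ∈ Finset.Ico (p+1) N, ∫ ω, h i ω ∂P ≤ Real.exp 1 := by
      calc ∏ i ∈ Finset.Ico (p+1) N, ∫ ω, h i ω ∂P
          ≤ ∏ _i ∈ Finset.Ico (p+1) N, (1 + 1 / (N:ℝ)) :=
            Finset.prod_le_prod (fun i hi => (hYE i hi).1) (fun i hi => (hYE i hi).2)
        _ = (1 + 1 / (N:ℝ)) ^ (Finset.Ico (p+1) N).card := by rw [Finset.prod_const]
        _ ≤ (1 + 1 / (N:ℝ)) ^ N := by
            refine pow_le_pow_right₀ hone ?_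
            rw [Nat.card_Ico]; omega
        _ ≤ (Real.exp (1 / (N:ℝ))) ^ N := by
            refine pow_le_pow_left₀ (by positivity) ?_ N
            have := Real.add_one_le_exp (1 / (N:ℝ))
            linarith
        _ = Real.exp 1 := by
            rw [← Real.exp_nat_mul]
            congr 1
            field_simp
    have hprod0 : 0 ≤ ∏ i ∈ Finset.Ico (p+1) N, ∫ ω, h i ω ∂P :=
      Finset.prod_nonneg fun i hi => (hYE i hi).1
    rw [hEeq]
    calc (∫ ω, h p ω ∂P) * ∏ i ∈ Finset.Ico (p+1) N, ∫ ω, h i ω ∂P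
        ≤ ((l:ℝ) * εm ^ 2) * Real.exp 1 :=
          mul_le_mul hZE hprodle hprod0 (by positivity)
      _ = Real.exp 1 * l * εm ^ 2 := by ring
  -- MemLp of X p
  have hXL2 : ∀ p ∈ Finset.range N, MemLp (X p) 2 P := by
    intro p hp
    have hpN := Finset.mem_range.1 hp
    exact (memLp_two_iff_integrable_sq (hXmeas p hpN).aestronglyMeasurable).2
      (hXint p hpN).1
  -- measurability of ε
  have hεmeas : Measurable ε := by
    simp only [hεdef]
    exact (matNorm_measurable.comp
      (matSub_measurable measurable_const (mprod_measurable V N hVmeas))).div_const _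
  -- assemble
  have hsumle := sq_integral_sum_le (P := P) (f := X) (Finset.range N) hXL2
    (fun p _ ω => hXpos p ω)
  have hsumint : Integrable (fun ω => (∑ p ∈ Finset.range N, X p ω) ^ 2) P :=
    integrable_sq_of_memℒp (memLp_finset_sum (Finset.range N) hXL2)
  have hvar : variance ε P ≤ ∫ ω, ε ω ^ 2 ∂P :=
    variance_le_expectation_sq hεmeas.aestronglyMeasurable
  have h2 : ∫ ω, ε ω ^ 2 ∂P ≤ ∫ ω, (∑ p ∈ Finset.range N, X p ω) ^ 2 ∂P := by
    refine integral_mono_of_nonneg (ae_of_all _ fun ω => sq_nonneg _) hsumint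
      (ae_of_all _ fun ω => ?_)
    have h0 : 0 ≤ ε ω := div_nonneg (norm_nonneg _) hD.le
    exact pow_le_pow_left₀ h0 (hεle ω) 2
  set c := Real.sqrt (Real.exp 1 * l) with hcdef
  have hl' : (0:ℝ) < l := by exact_mod_cast Nat.pos_of_ne_zero (by omega)
  have hN' : (0:ℝ) < N := by exact_mod_cast Nat.pos_of_ne_zero (by omega)
  have hel : (0:ℝ) < Real.exp 1 * l := by positivity
  have hc : 0 < (N:ℝ) * c := mul_pos hN' (Real.sqrt_pos.2 hel)
  have hclaim : ∀ p ∈ Finset.range N, Real.sqrt (∫ ω, X p ω ^ 2 ∂P) ≤ c * εm := by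
    intro p hp
    have h := (hXint p (Finset.mem_range.1 hp)).2
    calc Real.sqrt (∫ ω, X p ω ^ 2 ∂P) ≤ Real.sqrt (Real.exp 1 * l * εm ^ 2) :=
          Real.sqrt_le_sqrt h
      _ = c * εm := by rw [Real.sqrt_mul hel.le, Real.sqrt_sq hεm]
  have hsum2 : ∑ p ∈ Finset.range N, Real.sqrt (∫ ω, X p ω ^ 2 ∂P) ≤ (N:ℝ) * (c * εm) := by
    calc ∑ p ∈ Finset.range N, Real.sqrt (∫ ω, X p ω ^ 2 ∂P)
        ≤ ∑ _p ∈ Finset.range N, c * εm := Finset.sum_le_sum hclaim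
      _ = (N:ℝ) * (c * εm) := by
          rw [Finset.sum_const, Finset.card_range, nsmul_eq_mul]
  have hfin : (N:ℝ) * (c * εm) ≤ εt := by
    have h := (le_div_iff₀ hc).1 hεm_le
    calc (N:ℝ) * (c * εm) = εm * ((N:ℝ) * c) := by ring
      _ ≤ εt := h
  have hS0 : 0 ≤ ∑ p ∈ Finset.range N, Real.sqrt (∫ ω, X p ω ^ 2 ∂P) :=
    Finset.sum_nonneg fun p _ => Real.sqrt_nonneg _
  have hvar2 : variance ε P ≤ εt ^ 2 := by
    have hchain : variance ε P ≤
        (∑ p ∈ Finset.range N, Real.sqrt (∫ ω, X p ω ^ 2 ∂P)) ^ 2 :=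
      hvar.trans (h2.trans hsumle)
    have hsq : (∑ p ∈ Finset.range N, Real.sqrt (∫ ω, X p ω ^ 2 ∂P)) ^ 2 ≤ εt ^ 2 :=
      pow_le_pow_left₀ hS0 (hsum2.trans hfin) 2
    linarith
  calc Real.sqrt (variance ε P) ≤ Real.sqrt (εt ^ 2) := Real.sqrt_le_sqrt hvar2
    _ = εt := Real.sqrt_sq hεt.le
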